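/- The conditional expected number of elimination rounds E[I(2,n)] is strictly increasing in n: for every n ≥ 1, E[I(2,n+1)] > E[I(2,n)]. -/

import Mathlib

open Finset Filter

noncomputable section

/-- Row action `i` is strictly dominated in the restricted game with Row actions `X`
and Column actions `Y`, for Row payoff matrix `R`. -/
def RowDomIn {m n : ℕ} (R : Fin m → Fin n → ℝ) (X : Finset (Fin m)) (Y : Finset (Fin n))
    (i : Fin m) : Prop :=
  ∃ i' ∈ X, ∀ j ∈ Y, R i j < R i' j

/-- Column action `j` is strictly dominated in the restricted game with Row actions `X`
and Column actions `Y`, for Column payoff matrix `C`. -/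
def ColDomIn {m n : ℕ} (C : Fin m → Fin n → ℝ) (X : Finset (Fin m)) (Y : Finset (Fin n))
    (j : Fin n) : Prop :=
  ∃ j' ∈ Y, ∀ i ∈ X, C i j < C i j'

open Classical in
/-- One round of iterated elimination: simultaneously delete every strictly dominated
action of both players in the current restricted game. -/
def elimStep {m n : ℕ} (R C : Fin m → Fin n → ℝ)
    (p : Finset (Fin m) × Finset (Fin n)) : Finset (Fin m) × Finset (Fin n) :=
  (p.1.filter fun i => ¬ RowDomIn R p.1 p.2 i,
   p.2.filter fun j => ¬ ColDomIn C p.1 p.2 j)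

/-- Surviving actions of the subgame `(p.1, p.2)` after iterated elimination of strictly
dominated actions (iterating `m + n` times surely reaches the fixed point). -/
def survivorsFrom {m n : ℕ} (R C : Fin m → Fin n → ℝ)
    (p : Finset (Fin m) × Finset (Fin n)) : Finset (Fin m) × Finset (Fin n) :=
  (elimStep R C)^[m + n] p

/-- The subgame `(p.1, p.2)` is strict-dominance solvable: exactly one action of each
player survives iterated elimination of strictly dominated actions. -/
def SolvableFrom {m n : ℕ} (R C : Fin m → Fin n → ℝ)
    (p : Finset (Fin m) × Finset (Fin n)) : Prop :=
  (survivorsFrom R C p).1.card = 1 ∧ (survivorsFrom R C p).2.card = 1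

/-- Surviving actions of the full game after iterated elimination. -/
def survivors {m n : ℕ} (R C : Fin m → Fin n → ℝ) : Finset (Fin m) × Finset (Fin n) :=
  survivorsFrom R C (Finset.univ, Finset.univ)

/-- The game is strict-dominance solvable. -/
def Solvable {m n : ℕ} (R C : Fin m → Fin n → ℝ) : Prop :=
  SolvableFrom R C (Finset.univ, Finset.univ)

/-- The number of rounds performed by the iterated elimination procedure:
the least `k` such that round `k + 1` deletes nothing more. -/
def elimRounds {m n : ℕ} (R C : Fin m → Fin n → ℝ) : ℕ :=
  sInf {k | (elimStep R C)^[k + 1] (Finset.univ, Finset.univ)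
          = (elimStep R C)^[k] (Finset.univ, Finset.univ)}

/-- Sample space of the random game `G(m,n)`: for each Column action an i.i.d. uniform
permutation giving Row's ordinal payoffs in that column, and for each Row action an
i.i.d. uniform permutation giving Column's ordinal payoffs in that row. -/
abbrev Omega (m n : ℕ) := (Fin n → Equiv.Perm (Fin m)) × (Fin m → Equiv.Perm (Fin n))

/-- Row's payoff matrix of the realized game. -/
def RPay {m n : ℕ} (ω : Omega m n) : Fin m → Fin n → ℝ := fun i j => ((ω.1 j) i : ℕ)

/-- Column's payoff matrix of the realized game. -/
def CPay {m n : ℕ} (ω : Omega m n) : Fin m → Fin n → ℝ := fun i j => ((ω.2 i) j : ℕ)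

/-- Probability of an event under the uniform distribution on `Omega m n`
(i.e. all `m + n` permutations uniform and mutually independent). -/
def Pr {m n : ℕ} (E : Set (Omega m n)) : ℝ :=
  (E.toFinite.toFinset.card : ℝ) / (Fintype.card (Omega m n) : ℝ)

open Classical in
/-- Number of Row actions that are not strictly dominated. -/
def UR {m n : ℕ} (ω : Omega m n) : ℕ :=
  (Finset.univ.filter fun i => ¬ RowDomIn (RPay ω) Finset.univ Finset.univ i).card

open Classical in
/-- Number of Column actions that are not strictly dominated. -/
def UC {m n : ℕ} (ω : Omega m n) : ℕ :=
  (Finset.univ.filter fun j => ¬ ColDomIn (CPay ω) Finset.univ Finset.univ j).card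

/-- Number of Row actions surviving iterated elimination. -/
def SR {m n : ℕ} (ω : Omega m n) : ℕ := (survivors (RPay ω) (CPay ω)).1.card

/-- Number of Column actions surviving iterated elimination. -/
def SC {m n : ℕ} (ω : Omega m n) : ℕ := (survivors (RPay ω) (CPay ω)).2.card

/-- The realized game is strict-dominance solvable. -/
def GameSolvable {m n : ℕ} (ω : Omega m n) : Prop := Solvable (RPay ω) (CPay ω)

/-- Number of rounds of the iterated elimination procedure in the realized game. -/
def GameRounds {m n : ℕ} (ω : Omega m n) : ℕ := elimRounds (RPay ω) (CPay ω)

/-- `π(m,n)`: probability that the random game `G(m,n)` is strict-dominance solvable. -/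
def probSolvable (m n : ℕ) : ℝ := Pr {ω : Omega m n | GameSolvable ω}

/-- Expected number of Column's strictly undominated actions, `E[U^C(m,n)]`. -/
def expUC (m n : ℕ) : ℝ :=
  (∑ ω : Omega m n, (UC ω : ℝ)) / (Fintype.card (Omega m n) : ℝ)

/-- Expected number of Column actions surviving iterated elimination, `E[S^C(m,n)]`. -/
def expSC (m n : ℕ) : ℝ :=
  (∑ ω : Omega m n, (SC ω : ℝ)) / (Fintype.card (Omega m n) : ℝ)

open Classical in
/-- `E[I(m,n)]`: expected number of elimination rounds conditional on the game being
strict-dominance solvable. -/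
def condExpRounds (m n : ℕ) : ℝ :=
  (∑ ω : Omega m n, if GameSolvable ω then (GameRounds ω : ℝ) else 0) /
    (∑ ω : Omega m n, if GameSolvable ω then (1 : ℝ) else 0)

/-- Unsigned Stirling numbers of the first kind. -/
def stirling1 : ℕ → ℕ → ℕ
  | 0, 0 => 1
  | 0, _ + 1 => 0
  | _ + 1, 0 => 0
  | n + 1, k + 1 => n * stirling1 n (k + 1) + stirling1 n k

end


noncomputable section AuxDev
open Finset Equiv
variable {n : ℕ}

/-- right-to-left maxima -/
def RLmax (τ : Equiv.Perm (Fin n)) (p : Fin n) : Prop := ∀ q, p < q → τ q < τ p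

instance (τ : Equiv.Perm (Fin n)) (p : Fin n) : Decidable (RLmax τ p) := by
  unfold RLmax; infer_instance

def recs (τ : Equiv.Perm (Fin n)) : Finset (Fin n) := univ.filter (fun p => RLmax τ p)
def nonrecs (τ : Equiv.Perm (Fin n)) : Finset (Fin n) := univ.filter (fun p => ¬ RLmax τ p)

def dfact : ℕ → ℕ
  | 0 => 1
  | (k+1) => (2*k+1) * dfact k

def insPerm (q : Fin (n+1)) (σ : Equiv.Perm (Fin n)) : Equiv.Perm (Fin (n+1)) :=
  (finSuccEquiv' q).trans ((σ.optionCongr).trans (finSuccEquiv n).symm)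

lemma insPerm_self (q : Fin (n+1)) (σ : Equiv.Perm (Fin n)) : insPerm q σ q = 0 := by
  simp [insPerm]

lemma insPerm_succAbove (q : Fin (n+1)) (σ : Equiv.Perm (Fin n)) (i : Fin n) :
    insPerm q σ (q.succAbove i) = (σ i).succ := by
  simp [insPerm]

lemma insPerm_bij : Function.Bijective
    (fun p : Fin (n+1) × Equiv.Perm (Fin n) => insPerm p.1 p.2) := by
  rw [Fintype.bijective_iff_injective_and_card]
  constructor
  · rintro ⟨q, σ⟩ ⟨q', σ'⟩ h
    simp only at h
    have hq : q = q' := by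
      have h1 : insPerm q σ q = 0 := insPerm_self q σ
      have h2 : insPerm q' σ' q' = 0 := insPerm_self q' σ'
      rw [h] at h1
      exact (insPerm q' σ').injective (h1.trans h2.symm)
    subst hq
    have hσ : σ = σ' := by
      ext i
      have := insPerm_succAbove q σ i
      rw [h, insPerm_succAbove] at this
      exact Fin.val_injective (congrArg Fin.val (Fin.succ_injective _ this.symm)) |>.symm ▸ rfl
    rw [hσ]
  · simp [Fintype.card_perm, Nat.factorial_succ]

lemma RLmax_insPerm_self (q : Fin (n+1)) (σ : Equiv.Perm (Fin n)) :
    RLmax (insPerm q σ) q ↔ q = Fin.last n := by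
  constructor
  · intro h
    by_contra hq
    have hlt : q < Fin.last n := lt_of_le_of_ne (Fin.le_last q) hq
    have := h (Fin.last n) hlt
    rw [insPerm_self] at this
    exact Fin.not_lt_zero _ this
  · rintro rfl p hp
    exact absurd hp (not_lt.2 (Fin.le_last p))

lemma RLmax_insPerm_succAbove (q : Fin (n+1)) (σ : Equiv.Perm (Fin n)) (i : Fin n) :
    RLmax (insPerm q σ) (q.succAbove i) ↔ RLmax σ i := by
  constructor
  · intro h i' hi'
    have := h (q.succAbove i') (Fin.succAbove_lt_succAbove_iff.2 hi')
    rw [insPerm_succAbove, insPerm_succAbove, Fin.succ_lt_succ_iff] at this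
    exact this
  · intro h p hp
    rcases eq_or_ne p q with rfl | hne
    · rw [insPerm_self, insPerm_succAbove]; exact Fin.succ_pos _
    · obtain ⟨i', rfl⟩ := Fin.exists_succAbove_eq hne
      rw [insPerm_succAbove, insPerm_succAbove, Fin.succ_lt_succ_iff]
      exact h i' (Fin.succAbove_lt_succAbove_iff.1 hp)

lemma recs_insPerm (q : Fin (n+1)) (σ : Equiv.Perm (Fin n)) :
    recs (insPerm q σ) = ((recs σ).image q.succAbove) ∪ (if q = Fin.last n then {q} else ∅) := by
  ext p
  simp only [recs, mem_filter, mem_univ, true_and, mem_union, mem_image]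
  rcases eq_or_ne p q with rfl | hne
  · rw [RLmax_insPerm_self]
    constructor
    · intro h; right; simp [h]
    · rintro (⟨i, _, hi⟩ | h)
      · exact absurd hi (Fin.succAbove_ne p i)
      · split at h <;> simp_all
  · obtain ⟨i, rfl⟩ := Fin.exists_succAbove_eq hne
    rw [RLmax_insPerm_succAbove]
    constructor
    · intro h; exact Or.inl ⟨i, h, rfl⟩
    · rintro (⟨i', hi', he⟩ | h)
      · have : i' = i := Fin.succAbove_right_injective he
        rwa [this] at hi'
      · exfalso; split at h <;> simp_all

lemma recs_card_insPerm (q : Fin (n+1)) (σ : Equiv.Perm (Fin n)) :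
    (recs (insPerm q σ)).card = (recs σ).card + (if q = Fin.last n then 1 else 0) := by
  rw [recs_insPerm, card_union_of_disjoint, card_image_of_injective _ Fin.succAbove_right_injective]
  · congr 1; split <;> simp
  · rw [Finset.disjoint_right]
    intro x hx
    split at hx
    · simp only [mem_singleton] at hx
      subst hx
      simp only [mem_image]
      rintro ⟨i, _, hi⟩
      exact Fin.succAbove_ne _ i hi
    · exact absurd hx (notMem_empty x)

lemma nonrecs_card_add (τ : Equiv.Perm (Fin n)) : (recs τ).card + (nonrecs τ).card = n := by
  have := Finset.card_filter_add_card_filter_not (s := (univ : Finset (Fin n)))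
    (p := fun p => RLmax τ p)
  simpa [recs, nonrecs] using this

lemma recs_card_le (τ : Equiv.Perm (Fin n)) : (recs τ).card ≤ n := by
  have := nonrecs_card_add τ; omega

lemma nonrecs_card_insPerm (q : Fin (n+1)) (σ : Equiv.Perm (Fin n)) :
    (nonrecs (insPerm q σ)).card = (nonrecs σ).card + (if q = Fin.last n then 0 else 1) := by
  have h1 := nonrecs_card_add (insPerm q σ)
  have h2 := nonrecs_card_add σ
  have h3 := recs_card_insPerm q σ
  split at h3 <;> split <;> omega

lemma last_mem_recs (τ : Equiv.Perm (Fin (n+1))) : Fin.last n ∈ recs τ := by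
  simp only [recs, mem_filter, mem_univ, true_and]
  intro p hp
  exact absurd hp (not_lt.2 (Fin.le_last p))

lemma recs_card_pos (τ : Equiv.Perm (Fin (n+1))) : 1 ≤ (recs τ).card :=
  card_pos.2 ⟨_, last_mem_recs τ⟩

lemma sum_pow_nonrecs : ∀ n : ℕ, (∑ τ : Equiv.Perm (Fin n), 2 ^ ((nonrecs τ).card)) = dfact n := by
  intro n
  induction n with
  | zero =>
    have h : ∀ τ : Equiv.Perm (Fin 0), 2 ^ ((nonrecs τ).card) = 1 := by
      intro τ
      have : nonrecs τ = ∅ := by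
        apply Finset.eq_empty_of_forall_notMem; intro x; exact absurd x.pos (by omega)
      simp [this]
    rw [Finset.sum_congr rfl (fun τ _ => h τ), Finset.sum_const, Finset.card_univ,
      Fintype.card_perm]
    simp [dfact]
  | succ n ih =>
    rw [← Fintype.sum_bijective _ insPerm_bij _ _ (fun p => rfl)]
    rw [Fintype.sum_prod_type]
    have hpt : ∀ q : Fin (n+1), ∀ σ : Equiv.Perm (Fin n),
        2 ^ ((nonrecs (insPerm q σ)).card)
          = (if q = Fin.last n then 1 else 2) * 2 ^ ((nonrecs σ).card) := by
      intro q σ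
      rw [nonrecs_card_insPerm]
      split <;> ring
    calc ∑ q : Fin (n+1), ∑ σ : Equiv.Perm (Fin n), 2 ^ ((nonrecs (insPerm q σ)).card)
        = ∑ q : Fin (n+1), ∑ σ : Equiv.Perm (Fin n),
            (if q = Fin.last n then 1 else 2) * 2 ^ ((nonrecs σ).card) := by
          exact Finset.sum_congr rfl fun q _ => Finset.sum_congr rfl fun σ _ => hpt q σ
      _ = (∑ q : Fin (n+1), (if q = Fin.last n then 1 else 2)) * dfact n := by
          rw [← ih, Finset.sum_mul]
          exact Finset.sum_congr rfl fun q _ => (Finset.mul_sum _ _ _).symm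
      _ = (2*n+1) * dfact n := by
          congr 1
          have : ∀ q : Fin (n+1), (if q = Fin.last n then 1 else 2)
              = 1 + (if q = Fin.last n then 0 else 1) := by
            intro q; split <;> rfl
          rw [Finset.sum_congr rfl fun q _ => this q, Finset.sum_add_distrib,
            Finset.sum_const]
          simp [Finset.sum_ite, Finset.filter_eq', Finset.filter_ne', Finset.card_erase_of_mem]
          ring
      _ = dfact (n+1) := rfl

lemma recs_card_one_iff_perm0 : ∀ τ : Equiv.Perm (Fin 1), (recs τ).card = 1 := by decide

lemma count_recs_one : ∀ n : ℕ, 1 ≤ n →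
    (∑ τ : Equiv.Perm (Fin n), (if (recs τ).card = 1 then 1 else 0)) = (n-1).factorial := by
  intro n
  induction n with
  | zero => omega
  | succ n ih =>
    intro _
    rcases Nat.eq_zero_or_pos n with rfl | hn
    · rw [Finset.sum_congr rfl (fun τ _ => by rw [if_pos (recs_card_one_iff_perm0 τ)]),
        Finset.sum_const, Finset.card_univ, Fintype.card_perm]
      simp
    · rw [← Fintype.sum_bijective _ insPerm_bij _ _ (fun p => rfl), Fintype.sum_prod_type]
      have hpt : ∀ q : Fin (n+1), ∀ σ : Equiv.Perm (Fin n),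
          (if (recs (insPerm q σ)).card = 1 then 1 else 0)
            = (if q = Fin.last n then 0 else 1) * (if (recs σ).card = 1 then 1 else 0) := by
        intro q σ
        rw [recs_card_insPerm]
        obtain ⟨m, rfl⟩ : ∃ m, n = m + 1 := ⟨n - 1, by omega⟩
        have h1 := recs_card_pos σ
        by_cases hq : q = Fin.last (m+1)
        · simp only [if_pos ‹q = Fin.last (m+1)›] at *
          rw [if_neg (by omega), zero_mul]
        · simp only [if_neg ‹¬ q = Fin.last (m+1)›, add_zero, one_mul]
      calc ∑ q : Fin (n+1), ∑ σ : Equiv.Perm (Fin n),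
            (if (recs (insPerm q σ)).card = 1 then 1 else 0)
          = ∑ q : Fin (n+1), ∑ σ : Equiv.Perm (Fin n),
              (if q = Fin.last n then 0 else 1) * (if (recs σ).card = 1 then 1 else 0) := by
            exact Finset.sum_congr rfl fun q _ => Finset.sum_congr rfl fun σ _ => hpt q σ
        _ = (∑ q : Fin (n+1), (if q = Fin.last n then 0 else 1)) * (n-1).factorial := by
            rw [← ih hn, Finset.sum_mul]
            exact Finset.sum_congr rfl fun q _ => (Finset.mul_sum _ _ _).symm
        _ = n * (n-1).factorial := by
            congr 1
            simp [Finset.sum_ite, Finset.filter_eq', Finset.filter_ne', Finset.card_erase_of_mem]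
        _ = (n+1-1).factorial := by
            obtain ⟨m, rfl⟩ : ∃ m, n = m + 1 := ⟨n - 1, by omega⟩
            simp [Nat.factorial_succ]

/-- abstract column domination for a pair of permutations -/
def pairDom (σ0 σ1 : Equiv.Perm (Fin n)) (j : Fin n) : Prop :=
  ∃ j', σ0 j < σ0 j' ∧ σ1 j < σ1 j'

instance (σ0 σ1 : Equiv.Perm (Fin n)) (j : Fin n) : Decidable (pairDom σ0 σ1 j) := by
  unfold pairDom; infer_instance

lemma pairDom_iff_not_RLmax (σ0 τ : Equiv.Perm (Fin n)) (j : Fin n) :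
    pairDom σ0 (τ * σ0) j ↔ ¬ RLmax τ (σ0 j) := by
  constructor
  · rintro ⟨j', h0, h1⟩ h
    exact absurd (h (σ0 j') h0) (not_lt.2 (le_of_lt h1))
  · intro h
    simp only [RLmax, not_forall] at h
    obtain ⟨q, hq, hlt⟩ := h
    refine ⟨σ0⁻¹ q, ?_, ?_⟩
    · simpa using hq
    · have hne : τ q ≠ τ (σ0 j) := fun he => absurd (τ.injective he) (ne_of_gt hq)
      have : τ (σ0 j) < τ q := lt_of_le_of_ne (not_lt.1 hlt) (Ne.symm hne)
      simpa [Equiv.Perm.mul_apply] using this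

lemma card_pairDom (σ0 τ : Equiv.Perm (Fin n)) :
    (univ.filter fun j => pairDom σ0 (τ * σ0) j).card = (nonrecs τ).card := by
  apply Finset.card_bij (fun j _ => σ0 j)
  · intro j hj
    simp only [mem_filter, mem_univ, true_and] at hj ⊢
    rw [pairDom_iff_not_RLmax] at hj
    simpa [nonrecs]
  · intro a _ b _ h; exact σ0.injective h
  · intro p hp
    refine ⟨σ0⁻¹ p, ?_, by simp⟩
    simp only [nonrecs, mem_filter, mem_univ, true_and] at hp
    simp only [mem_filter, mem_univ, true_and]
    rw [pairDom_iff_not_RLmax]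
    simpa using hp

lemma card_pairFront (σ0 τ : Equiv.Perm (Fin n)) :
    (univ.filter fun j => ¬ pairDom σ0 (τ * σ0) j).card = (recs τ).card := by
  have h1 := Finset.card_filter_add_card_filter_not (s := (univ : Finset (Fin n)))
    (p := fun j => pairDom σ0 (τ * σ0) j)
  have h2 := nonrecs_card_add τ
  have h3 := card_pairDom σ0 τ
  simp only [Finset.card_univ, Fintype.card_fin] at h1
  omega

end AuxDev

noncomputable section GameDev
open Finset Equiv
variable {n : ℕ}

/-- the favored row of a column, given its `Fin 2`-permutation of payoffs -/
def favOf (g : Equiv.Perm (Fin 2)) : Fin 2 := g⁻¹ 1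

/-- column domination in terms of the column player's permutations -/
def colDomC (c : Fin 2 → Equiv.Perm (Fin n)) (Y : Finset (Fin n)) (j : Fin n) : Prop :=
  ∃ j' ∈ Y, ∀ i : Fin 2, c i j < c i j'

instance (c : Fin 2 → Equiv.Perm (Fin n)) (Y : Finset (Fin n)) (j : Fin n) :
    Decidable (colDomC c Y j) := by unfold colDomC; infer_instance

/-- the Pareto frontier of columns -/
def Fc (c : Fin 2 → Equiv.Perm (Fin n)) : Finset (Fin n) :=
  univ.filter (fun j => ¬ colDomC c univ j)

lemma fin2_cases (x : Fin 2) : x = 0 ∨ x = 1 := by revert x; decide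

lemma fin2_ne (x i : Fin 2) (h : x ≠ i) : x = i + 1 := by revert x i; decide

lemma favOf_apply (g : Equiv.Perm (Fin 2)) : g (favOf g) = 1 := g.apply_symm_apply 1

lemma apply_ne_fav (g : Equiv.Perm (Fin 2)) {i : Fin 2} (h : i ≠ favOf g) : g i = 0 := by
  have h1 : g i ≠ 1 := by
    intro he
    apply h
    rw [favOf, ← he]
    exact (g.symm_apply_apply i).symm
  rcases fin2_cases (g i) with h0 | h0
  · exact h0
  · exact absurd h0 h1

lemma cpay_lt (ω : Omega 2 n) {i : Fin 2} {j j' : Fin n} :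
    CPay ω i j < CPay ω i j' ↔ ω.2 i j < ω.2 i j' := by
  unfold CPay
  exact_mod_cast Iff.rfl

lemma colDomIn_univ_iff (ω : Omega 2 n) (Y : Finset (Fin n)) (j : Fin n) :
    ColDomIn (CPay ω) univ Y j ↔ colDomC ω.2 Y j := by
  unfold ColDomIn colDomC
  refine exists_congr fun j' => and_congr_right fun _ => ?_
  constructor
  · intro h i; exact (cpay_lt ω).1 (h i (mem_univ i))
  · intro h i _; exact (cpay_lt ω).2 (h i)

lemma colDomIn_single_iff (ω : Omega 2 n) (i : Fin 2) (Y : Finset (Fin n)) (j : Fin n) :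
    ColDomIn (CPay ω) {i} Y j ↔ ∃ j' ∈ Y, ω.2 i j < ω.2 i j' := by
  unfold ColDomIn
  refine exists_congr fun j' => and_congr_right fun _ => ?_
  constructor
  · intro h; exact (cpay_lt ω).1 (h i (mem_singleton_self i))
  · intro h i' hi'
    rw [mem_singleton] at hi'; subst hi'
    exact (cpay_lt ω).2 h

lemma rpay_lt (ω : Omega 2 n) {i i' : Fin 2} {j : Fin n} :
    RPay ω i j < RPay ω i' j ↔ ω.1 j i < ω.1 j i' := by
  unfold RPay
  exact_mod_cast Iff.rfl

lemma rowDomIn_univ_iff (ω : Omega 2 n) {Y : Finset (Fin n)} (hY : Y.Nonempty) (i : Fin 2) :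
    RowDomIn (RPay ω) univ Y i ↔ ∀ j ∈ Y, favOf (ω.1 j) ≠ i := by
  constructor
  · rintro ⟨i', -, h⟩ j hj hfav
    have hlt := (rpay_lt ω).1 (h j hj)
    have h1 : ω.1 j i = 1 := hfav ▸ favOf_apply (ω.1 j)
    rw [h1] at hlt
    have := (ω.1 j i').2
    omega
  · intro h
    refine ⟨i + 1, mem_univ _, fun j hj => ?_⟩
    have hf : favOf (ω.1 j) = i + 1 := fin2_ne _ _ (h j hj)
    have h1 : ω.1 j (i + 1) = 1 := hf ▸ favOf_apply (ω.1 j)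
    have h0 : ω.1 j i = 0 := apply_ne_fav _ (by
      rw [hf]; exact (by decide : ∀ x : Fin 2, x ≠ x + 1) i)
    rw [rpay_lt, h0, h1]
    decide

lemma not_rowDomIn_single (ω : Omega 2 n) {i : Fin 2} {Y : Finset (Fin n)} (hY : Y.Nonempty) :
    ¬ RowDomIn (RPay ω) {i} Y i := by
  rintro ⟨i', hi', h⟩
  rw [mem_singleton] at hi'; subst hi'
  obtain ⟨j, hj⟩ := hY
  exact lt_irrefl _ (h j hj)

/-- the column where permutation `σ` attains its maximum -/
def gmaxF (hn : 0 < n) (σ : Equiv.Perm (Fin n)) : Fin n := σ⁻¹ ⟨n-1, by omega⟩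

lemma gmax_le (hn : 0 < n) (σ : Equiv.Perm (Fin n)) (j : Fin n) : σ j ≤ σ (gmaxF hn σ) := by
  rw [gmaxF, show σ (σ⁻¹ ⟨n-1, by omega⟩) = ⟨n-1, by omega⟩ from σ.apply_symm_apply _, Fin.le_def]
  show (σ j : ℕ) ≤ n - 1
  have := (σ j).2
  omega

lemma mem_Fc_iff (c : Fin 2 → Equiv.Perm (Fin n)) (j : Fin n) :
    j ∈ Fc c ↔ ¬ colDomC c univ j := by simp [Fc]

lemma gmax_mem_Fc (hn : 0 < n) (c : Fin 2 → Equiv.Perm (Fin n)) (i : Fin 2) :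
    gmaxF hn (c i) ∈ Fc c := by
  rw [mem_Fc_iff]
  rintro ⟨j', -, hall⟩
  exact absurd (hall i) (not_lt.2 (gmax_le hn (c i) j'))

lemma Fc_nonempty (hn : 0 < n) (c : Fin 2 → Equiv.Perm (Fin n)) : (Fc c).Nonempty :=
  ⟨_, gmax_mem_Fc hn c 0⟩

open Classical

section Steps
variable (ω : Omega 2 n)

lemma F_stable {j : Fin n} (hj : j ∈ Fc ω.2) : ¬ ColDomIn (CPay ω) univ (Fc ω.2) j := by
  rw [colDomIn_univ_iff]
  rintro ⟨j', hj', hall⟩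
  rw [mem_Fc_iff] at hj
  exact hj ⟨j', mem_univ j', hall⟩

lemma step_col_univ_F :
    (Fc ω.2).filter (fun j => ¬ ColDomIn (CPay ω) univ (Fc ω.2) j) = Fc ω.2 :=
  filter_true_of_mem (fun j hj => F_stable ω hj)

lemma step_col_start :
    (univ : Finset (Fin n)).filter (fun j => ¬ ColDomIn (CPay ω) univ univ j) = Fc ω.2 := by
  ext j
  simp [Fc, mem_filter, colDomIn_univ_iff]

lemma step_row_single (i : Fin 2) {Y : Finset (Fin n)} (hY : Y.Nonempty) :
    ({i} : Finset (Fin 2)).filter (fun i' => ¬ RowDomIn (RPay ω) {i} Y i') = {i} := by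
  apply filter_true_of_mem
  intro i' hi'
  rw [mem_singleton] at hi'; subst hi'
  exact not_rowDomIn_single ω hY

lemma step_col_single (hn : 0 < n) (i : Fin 2) :
    (Fc ω.2).filter (fun j => ¬ ColDomIn (CPay ω) {i} (Fc ω.2) j)
      = {gmaxF hn (ω.2 i)} := by
  ext j
  simp only [mem_filter, mem_singleton, colDomIn_single_iff]
  constructor
  · rintro ⟨hjF, hnd⟩
    by_contra hne
    apply hnd
    refine ⟨gmaxF hn (ω.2 i), gmax_mem_Fc hn ω.2 i, ?_⟩
    exact lt_of_le_of_ne (gmax_le hn (ω.2 i) j) (fun he => hne ((ω.2 i).injective he))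
  · rintro rfl
    refine ⟨gmax_mem_Fc hn ω.2 i, ?_⟩
    rintro ⟨j', -, hlt⟩
    exact absurd hlt (not_lt.2 (gmax_le hn (ω.2 i) j'))

lemma fix_single (hn : 0 < n) (i : Fin 2) (j : Fin n) :
    elimStep (RPay ω) (CPay ω) ({i}, {j}) = ({i}, {j}) := by
  unfold elimStep
  refine Prod.ext ?_ ?_
  · exact step_row_single ω i ⟨j, mem_singleton_self j⟩
  · apply filter_true_of_mem
    intro j' hj'
    rw [mem_singleton] at hj'; subst hj'
    rw [colDomIn_single_iff]
    rintro ⟨j'', hj'', hlt⟩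
    rw [mem_singleton] at hj''; subst hj''
    exact lt_irrefl _ hlt

end Steps

/-- all columns favor row `i` -/
def ConstP (ω : Omega 2 n) : Prop := ∃ i, ∀ j, favOf (ω.1 j) = i

/-- all frontier columns favor a common row -/
def FUP (ω : Omega 2 n) : Prop := ∃ i, ∀ j ∈ Fc ω.2, favOf (ω.1 j) = i

section Traj
variable (ω : Omega 2 n)

lemma univ_fin_nonempty (hn : 0 < n) : (univ : Finset (Fin n)).Nonempty :=
  ⟨⟨0, hn⟩, mem_univ _⟩

lemma step_row_univ {Y : Finset (Fin n)} (hY : Y.Nonempty) {i : Fin 2}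
    (hall : ∀ j ∈ Y, favOf (ω.1 j) = i) :
    (univ : Finset (Fin 2)).filter (fun i' => ¬ RowDomIn (RPay ω) univ Y i') = {i} := by
  ext i'
  simp only [mem_filter, mem_univ, true_and, mem_singleton, rowDomIn_univ_iff ω hY]
  obtain ⟨j0, hj0⟩ := hY
  constructor
  · intro h
    by_contra hne
    exact h (fun j hj hfav => hne (hfav.symm.trans (hall j hj)))
  · rintro rfl h
    exact h j0 hj0 (hall j0 hj0)

lemma step_row_univ_split {Y : Finset (Fin n)} (hY : Y.Nonempty)
    (hsplit : ¬ ∃ i, ∀ j ∈ Y, favOf (ω.1 j) = i) :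
    (univ : Finset (Fin 2)).filter (fun i' => ¬ RowDomIn (RPay ω) univ Y i') = univ := by
  apply filter_true_of_mem
  intro i' _
  rw [rowDomIn_univ_iff ω hY]
  intro h
  apply hsplit
  refine ⟨i' + 1, fun j hj => fin2_ne _ _ (h j hj)⟩

/-- case A : all columns favor row i -/
lemma trajA (hn : 0 < n) {i : Fin 2} (hconst : ∀ j, favOf (ω.1 j) = i) :
    elimStep (RPay ω) (CPay ω) (univ, univ) = ({i}, Fc ω.2) := by
  unfold elimStep
  refine Prod.ext ?_ ?_
  · exact step_row_univ ω (univ_fin_nonempty hn) (fun j _ => hconst j)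
  · exact step_col_start ω

lemma traj_single (hn : 0 < n) (i : Fin 2) :
    elimStep (RPay ω) (CPay ω) ({i}, Fc ω.2) = ({i}, {gmaxF hn (ω.2 i)}) := by
  unfold elimStep
  refine Prod.ext ?_ ?_
  · exact step_row_single ω i (Fc_nonempty hn ω.2)
  · exact step_col_single ω hn i

lemma trajB (hn : 0 < n) (hnc : ¬ ConstP ω) :
    elimStep (RPay ω) (CPay ω) (univ, univ) = (univ, Fc ω.2) := by
  unfold elimStep
  refine Prod.ext ?_ ?_
  · apply step_row_univ_split ω (univ_fin_nonempty hn)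
    rintro ⟨i, h⟩
    exact hnc ⟨i, fun j => h j (mem_univ j)⟩
  · exact step_col_start ω

lemma trajB1 (hn : 0 < n) {i : Fin 2} (hFU : ∀ j ∈ Fc ω.2, favOf (ω.1 j) = i) :
    elimStep (RPay ω) (CPay ω) (univ, Fc ω.2) = ({i}, Fc ω.2) := by
  unfold elimStep
  refine Prod.ext ?_ ?_
  · exact step_row_univ ω (Fc_nonempty hn ω.2) hFU
  · exact step_col_univ_F ω

lemma trajB2 (hn : 0 < n) (hFsplit : ¬ ∃ i, ∀ j ∈ Fc ω.2, favOf (ω.1 j) = i) :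
    elimStep (RPay ω) (CPay ω) (univ, Fc ω.2) = (univ, Fc ω.2) := by
  unfold elimStep
  refine Prod.ext ?_ ?_
  · exact step_row_univ_split ω (Fc_nonempty hn ω.2) hFsplit
  · exact step_col_univ_F ω

end Traj

lemma elimRounds_eq {m' n' : ℕ} (R C : Fin m' → Fin n' → ℝ) (r : ℕ)
    (hmem : (elimStep R C)^[r+1] (univ,univ) = (elimStep R C)^[r] (univ,univ))
    (hlow : ∀ k < r, (elimStep R C)^[k+1] (univ,univ) ≠ (elimStep R C)^[k] (univ,univ)) :
    elimRounds R C = r := by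
  unfold elimRounds
  apply le_antisymm (Nat.sInf_le hmem)
  exact le_csInf ⟨r, hmem⟩ fun b hb => not_lt.1 fun hlt => hlow b hlt hb

lemma singleton_ne_univ (i : Fin 2) : ({i} : Finset (Fin 2)) ≠ univ := by
  revert i; decide

section Cases
variable (ω : Omega 2 n)

lemma iter2 (hn : 0 < n) {i : Fin 2} (hconst : ∀ j, favOf (ω.1 j) = i) :
    ∀ k, (elimStep (RPay ω) (CPay ω))^[k+2] (univ, univ)
      = ({i}, {gmaxF hn (ω.2 i)}) := by
  intro k
  induction k with
  | zero =>
    rw [Function.iterate_succ_apply', Function.iterate_one, trajA ω hn hconst,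
      traj_single ω hn i]
  | succ k ih =>
    rw [show k+1+2 = (k+2)+1 by omega, Function.iterate_succ_apply', ih,
      fix_single ω hn i _]

lemma caseA (hn : 0 < n) {i : Fin 2} (hconst : ∀ j, favOf (ω.1 j) = i) :
    GameSolvable ω ∧ GameRounds ω = (if (Fc ω.2).card = 1 then 1 else 2) := by
  have hsurv : survivorsFrom (RPay ω) (CPay ω) (univ, univ) = ({i}, {gmaxF hn (ω.2 i)}) := by
    show (elimStep (RPay ω) (CPay ω))^[2+n] (univ, univ) = _
    rw [show 2+n = (n-1)+1+2 by omega]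
    exact iter2 ω hn hconst _
  constructor
  · exact ⟨by rw [hsurv]; exact card_singleton i, by rw [hsurv]; exact card_singleton _⟩
  · show elimRounds (RPay ω) (CPay ω) = _
    have h1 : (elimStep (RPay ω) (CPay ω))^[1] (univ, univ) = ({i}, Fc ω.2) := by
      rw [Function.iterate_one]; exact trajA ω hn hconst
    have hne0 : (elimStep (RPay ω) (CPay ω))^[0+1] (univ, univ)
        ≠ (elimStep (RPay ω) (CPay ω))^[0] (univ, univ) := by
      rw [h1, Function.iterate_zero_apply]
      intro he
      exact _root_.singleton_ne_univ i (congrArg Prod.fst he)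
    by_cases hcard : (Fc ω.2).card = 1
    · rw [if_pos hcard]
      obtain ⟨a, ha⟩ := card_eq_one.1 hcard
      have hg : gmaxF hn (ω.2 i) ∈ Fc ω.2 := gmax_mem_Fc hn ω.2 i
      rw [ha, mem_singleton] at hg
      apply elimRounds_eq
      · rw [show (1:ℕ)+1 = 0+2 by omega, iter2 ω hn hconst, h1, ha, hg]
      · intro k hk
        interval_cases k
        · exact hne0
    · rw [if_neg hcard]
      apply elimRounds_eq
      · show (elimStep (RPay ω) (CPay ω))^[1+2] (univ, univ)
            = (elimStep (RPay ω) (CPay ω))^[0+2] (univ, univ)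
        rw [iter2 ω hn hconst 1, iter2 ω hn hconst 0]
      · intro k hk
        interval_cases k
        · exact hne0
        · rw [show (1:ℕ)+1 = 0+2 by omega, iter2 ω hn hconst, h1]
          intro he
          apply hcard
          have h2 := congrArg Prod.snd he
          simp only at h2
          rw [← h2, card_singleton]

lemma iter3 (hn : 0 < n) (hnc : ¬ ConstP ω) {i : Fin 2}
    (hFU : ∀ j ∈ Fc ω.2, favOf (ω.1 j) = i) :
    ∀ k, (elimStep (RPay ω) (CPay ω))^[k+3] (univ, univ)
      = ({i}, {gmaxF hn (ω.2 i)}) := by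
  intro k
  induction k with
  | zero =>
    rw [show (0:ℕ)+3 = 2+1 by omega, Function.iterate_succ_apply',
      Function.iterate_succ_apply', Function.iterate_one, trajB ω hn hnc,
      trajB1 ω hn hFU, traj_single ω hn i]
  | succ k ih =>
    rw [show k+1+3 = (k+3)+1 by omega, Function.iterate_succ_apply', ih,
      fix_single ω hn i _]

lemma caseB1 (hn : 0 < n) (hnc : ¬ ConstP ω) {i : Fin 2}
    (hFU : ∀ j ∈ Fc ω.2, favOf (ω.1 j) = i) :
    GameSolvable ω ∧ GameRounds ω = (if (Fc ω.2).card = 1 then 2 else 3) := by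
  have hsurv : survivorsFrom (RPay ω) (CPay ω) (univ, univ) = ({i}, {gmaxF hn (ω.2 i)}) := by
    show (elimStep (RPay ω) (CPay ω))^[2+n] (univ, univ) = _
    rw [show 2+n = (n-1)+3 by omega]
    exact iter3 ω hn hnc hFU _
  have h1 : (elimStep (RPay ω) (CPay ω))^[1] (univ, univ) = (univ, Fc ω.2) := by
    rw [Function.iterate_one]; exact trajB ω hn hnc
  have h2 : (elimStep (RPay ω) (CPay ω))^[2] (univ, univ) = ({i}, Fc ω.2) := by
    show (elimStep (RPay ω) (CPay ω))^[1+1] (univ, univ) = _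
    rw [Function.iterate_succ_apply', h1]
    exact trajB1 ω hn hFU
  have hFne : Fc ω.2 ≠ univ := by
    obtain ⟨j0, hj0⟩ : ∃ j, favOf (ω.1 j) ≠ i := by
      by_contra h
      push_neg at h
      exact hnc ⟨i, h⟩
    intro he
    exact hj0 (hFU j0 (he ▸ mem_univ j0))
  have hne0 : (elimStep (RPay ω) (CPay ω))^[0+1] (univ, univ)
      ≠ (elimStep (RPay ω) (CPay ω))^[0] (univ, univ) := by
    rw [h1, Function.iterate_zero_apply]
    intro he
    exact hFne (congrArg Prod.snd he)
  have hne1 : (elimStep (RPay ω) (CPay ω))^[1+1] (univ, univ)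
      ≠ (elimStep (RPay ω) (CPay ω))^[1] (univ, univ) := by
    rw [show ((1:ℕ)+1) = 2 from rfl, h2, h1]
    intro he
    exact _root_.singleton_ne_univ i (congrArg Prod.fst he)
  constructor
  · exact ⟨by rw [hsurv]; exact card_singleton i, by rw [hsurv]; exact card_singleton _⟩
  · show elimRounds (RPay ω) (CPay ω) = _
    by_cases hcard : (Fc ω.2).card = 1
    · rw [if_pos hcard]
      obtain ⟨a, ha⟩ := card_eq_one.1 hcard
      have hg : gmaxF hn (ω.2 i) ∈ Fc ω.2 := gmax_mem_Fc hn ω.2 i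
      rw [ha, mem_singleton] at hg
      apply elimRounds_eq
      · rw [show (2:ℕ)+1 = 0+3 by omega, iter3 ω hn hnc hFU, h2, ha, hg]
      · intro k hk
        interval_cases k
        · exact hne0
        · exact hne1
    · rw [if_neg hcard]
      apply elimRounds_eq
      · show (elimStep (RPay ω) (CPay ω))^[1+3] (univ, univ)
            = (elimStep (RPay ω) (CPay ω))^[0+3] (univ, univ)
        rw [iter3 ω hn hnc hFU 1, iter3 ω hn hnc hFU 0]
      · intro k hk
        interval_cases k
        · exact hne0
        · exact hne1
        · rw [show (2:ℕ)+1 = 0+3 by omega, iter3 ω hn hnc hFU, h2]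
          intro he
          apply hcard
          have hs := congrArg Prod.snd he
          simp only at hs
          rw [← hs, card_singleton]

lemma caseB2 (hn : 0 < n) (hFsplit : ¬ ∃ i, ∀ j ∈ Fc ω.2, favOf (ω.1 j) = i) :
    ¬ GameSolvable ω := by
  have hnc : ¬ ConstP ω := by
    rintro ⟨i, h⟩
    exact hFsplit ⟨i, fun j _ => h j⟩
  have hiter : ∀ k, (elimStep (RPay ω) (CPay ω))^[k+1] (univ, univ) = (univ, Fc ω.2) := by
    intro k
    induction k with
    | zero => rw [Function.iterate_one]; exact trajB ω hn hnc
    | succ k ih =>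
      rw [show k+1+1 = (k+1)+1 by omega, Function.iterate_succ_apply', ih]
      exact trajB2 ω hn hFsplit
  intro hs
  have h1 := hs.1
  show False
  have hsurv : survivorsFrom (RPay ω) (CPay ω) (univ, univ) = (univ, Fc ω.2) := by
    show (elimStep (RPay ω) (CPay ω))^[2+n] (univ, univ) = _
    rw [show 2+n = (n+1)+1 by omega]
    exact hiter _
  rw [hsurv] at h1
  simp only [card_univ, Fintype.card_fin] at h1
  omega

end Cases

section Wrap
variable (ω : Omega 2 n)

lemma constP_FUP (h : ConstP ω) : FUP ω := by
  obtain ⟨i, hi⟩ := h; exact ⟨i, fun j _ => hi j⟩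

lemma cardFc_one_FUP (h : (Fc ω.2).card = 1) : FUP ω := by
  obtain ⟨a, ha⟩ := card_eq_one.1 h
  refine ⟨favOf (ω.1 a), fun j hj => ?_⟩
  rw [ha, mem_singleton] at hj; subst hj; rfl

lemma solvable_iff (hn : 0 < n) : GameSolvable ω ↔ FUP ω := by
  constructor
  · intro hs
    by_contra hFU
    exact caseB2 ω hn hFU hs
  · rintro ⟨i, hi⟩
    by_cases hc : ConstP ω
    · obtain ⟨i0, h0⟩ := hc
      exact (caseA ω hn h0).1
    · exact (caseB1 ω hn hc hi).1

lemma rounds_real (hn : 0 < n) :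
    (if GameSolvable ω then (GameRounds ω : ℝ) else 0)
      = 3*(if FUP ω then (1:ℝ) else 0) - (if ConstP ω then (1:ℝ) else 0)
        - (if (Fc ω.2).card = 1 then (1:ℝ) else 0) := by
  by_cases hFU : FUP ω
  · rw [if_pos ((solvable_iff ω hn).2 hFU), if_pos hFU]
    by_cases hc : ConstP ω
    · obtain ⟨i, hi⟩ := hc
      have hc' : ConstP ω := ⟨i, hi⟩
      rw [(caseA ω hn hi).2]
      by_cases h1 : (Fc ω.2).card = 1 <;> simp [h1, hc'] <;> norm_num
    · obtain ⟨i, hi⟩ := hFU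
      rw [(caseB1 ω hn hc hi).2]
      by_cases h1 : (Fc ω.2).card = 1 <;> simp [h1, hc] <;> norm_num
  · rw [if_neg (fun hs => hFU ((solvable_iff ω hn).1 hs)), if_neg hFU,
      if_neg (fun hc => hFU (constP_FUP ω hc)),
      if_neg (fun h1 => hFU (cardFc_one_FUP ω h1))]
    norm_num

end Wrap

section Sums
open Classical

lemma card_filter_fav (i : Fin 2) :
    ((univ : Finset (Equiv.Perm (Fin 2))).filter (fun x => favOf x = i)).card = 1 := by
  revert i; decide

lemma sum_fav_indicator (i : Fin 2) :
    ∑ x : Equiv.Perm (Fin 2), (if favOf x = i then (1:ℝ) else 0) = 1 := by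
  rw [Finset.sum_boole]
  rw [show (univ.filter (fun x => favOf x = i)) = (univ.filter (fun x => favOf x = i)) from rfl]
  norm_cast
  exact_mod_cast card_filter_fav i

lemma sum_indicator_all (F : Finset (Fin n)) (hF : F.Nonempty) :
    ∑ u : Fin n → Equiv.Perm (Fin 2), (if (∃ i, ∀ j ∈ F, favOf (u j) = i) then (1:ℝ) else 0)
      = 2 * 2 ^ ((univ.filter (fun j => j ∉ F)).card) := by
  have hsplit : ∀ u : Fin n → Equiv.Perm (Fin 2),
      (if (∃ i, ∀ j ∈ F, favOf (u j) = i) then (1:ℝ) else 0)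
        = ∑ i : Fin 2, (if (∀ j ∈ F, favOf (u j) = i) then (1:ℝ) else 0) := by
    intro u
    rw [Fin.sum_univ_two]
    obtain ⟨j0, hj0⟩ := hF
    by_cases h : ∃ i, ∀ j ∈ F, favOf (u j) = i
    · obtain ⟨i, hi⟩ := h
      have hne : ∀ i' : Fin 2, i' ≠ i → ¬ (∀ j ∈ F, favOf (u j) = i') :=
        fun i' hne h' => hne ((h' j0 hj0).symm.trans (hi j0 hj0))
      rw [if_pos ⟨i, hi⟩]
      rcases fin2_cases i with rfl | rfl
      · rw [if_pos hi, if_neg (hne 1 (by decide))]; norm_num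
      · rw [if_neg (hne 0 (by decide)), if_pos hi]; norm_num
    · rw [if_neg h, if_neg (fun h' => h ⟨0, h'⟩), if_neg (fun h' => h ⟨1, h'⟩)]; norm_num
  rw [Finset.sum_congr rfl (fun u _ => hsplit u), Finset.sum_comm]
  have hinner : ∀ i : Fin 2, ∑ u : Fin n → Equiv.Perm (Fin 2),
      (if (∀ j ∈ F, favOf (u j) = i) then (1:ℝ) else 0)
        = 2 ^ ((univ.filter (fun j => j ∉ F)).card) := by
    intro i
    have hpt : ∀ u : Fin n → Equiv.Perm (Fin 2),
        (if (∀ j ∈ F, favOf (u j) = i) then (1:ℝ) else 0)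
          = ∏ j : Fin n, (if j ∈ F then (if favOf (u j) = i then (1:ℝ) else 0) else 1) := by
      intro u
      by_cases h : ∀ j ∈ F, favOf (u j) = i
      · rw [if_pos h]
        refine (Finset.prod_eq_one (fun j _ => ?_)).symm
        by_cases hj : j ∈ F
        · rw [if_pos hj, if_pos (h j hj)]
        · rw [if_neg hj]
      · rw [if_neg h]
        push_neg at h
        obtain ⟨j0', hj0', hne⟩ := h
        exact (Finset.prod_eq_zero (mem_univ j0') (by rw [if_pos hj0', if_neg hne])).symm
    rw [Finset.sum_congr rfl fun u _ => hpt u]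
    rw [← Fintype.piFinset_univ]
    have h2 : (∏ j : Fin n, ∑ x ∈ (univ : Finset (Equiv.Perm (Fin 2))),
          (if j ∈ F then (if favOf x = i then (1:ℝ) else 0) else 1))
        = ∑ u ∈ Fintype.piFinset (fun _ : Fin n => (univ : Finset (Equiv.Perm (Fin 2)))),
            ∏ j : Fin n, (if j ∈ F then (if favOf (u j) = i then (1:ℝ) else 0) else 1) :=
      Finset.prod_univ_sum _ _
    rw [← h2]
    have hcol : ∀ j : Fin n,
        (∑ x : Equiv.Perm (Fin 2), (if j ∈ F then (if favOf x = i then (1:ℝ) else 0) else 1))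
          = if j ∈ F then 1 else 2 := by
      intro j
      by_cases hj : j ∈ F
      · simp only [if_pos hj]; exact sum_fav_indicator i
      · simp only [if_neg hj]
        rw [Finset.sum_const, Finset.card_univ, Fintype.card_perm]
        norm_num
    rw [Finset.prod_congr rfl fun j _ => hcol j, Finset.prod_ite, Finset.prod_const,
      Finset.prod_const, one_pow, one_mul]
  rw [Fin.sum_univ_two, hinner 0, hinner 1]; ring

lemma Fc_pair (σ0 σ1 : Equiv.Perm (Fin n)) (j : Fin n) :
    j ∈ Fc ![σ0, σ1] ↔ ¬ pairDom σ0 σ1 j := by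
  rw [mem_Fc_iff]
  unfold colDomC pairDom
  simp [Fin.forall_fin_two]

lemma sum_c_pow :
    ∑ c : Fin 2 → Equiv.Perm (Fin n), (2:ℝ) ^ ((univ.filter (fun j => j ∉ Fc c)).card)
      = n.factorial * dfact n := by
  rw [← Equiv.sum_comp (piFinTwoEquiv (fun _ : Fin 2 => Equiv.Perm (Fin n))).symm
    (fun c => (2:ℝ) ^ ((univ.filter (fun j => j ∉ Fc c)).card))]
  have hsymm : ∀ p : Equiv.Perm (Fin n) × Equiv.Perm (Fin n),
      (piFinTwoEquiv (fun _ : Fin 2 => Equiv.Perm (Fin n))).symm p = ![p.1, p.2] := by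
    rintro ⟨a, b⟩; funext i; fin_cases i <;> rfl
  rw [Finset.sum_congr rfl fun p _ => by rw [hsymm p]]
  rw [Fintype.sum_prod_type]
  have hin : ∀ σ0 : Equiv.Perm (Fin n),
      ∑ σ1 : Equiv.Perm (Fin n), (2:ℝ) ^ ((univ.filter (fun j => j ∉ Fc ![σ0, σ1])).card)
        = (dfact n : ℝ) := by
    intro σ0
    rw [← Equiv.sum_comp (Equiv.mulRight σ0)
      (fun σ1 => (2:ℝ) ^ ((univ.filter (fun j => j ∉ Fc ![σ0, σ1])).card))]
    have hc : ∀ τ : Equiv.Perm (Fin n),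
        ((univ.filter (fun j => j ∉ Fc ![σ0, Equiv.mulRight σ0 τ])).card) = (nonrecs τ).card := by
      intro τ
      have he : Equiv.mulRight σ0 τ = τ * σ0 := rfl
      rw [he]
      have : (univ.filter (fun j => j ∉ Fc ![σ0, τ * σ0]))
          = (univ.filter (fun j => pairDom σ0 (τ * σ0) j)) := by
        apply Finset.filter_congr
        intro j _
        rw [Fc_pair, not_not]
      rw [this, card_pairDom]
    rw [Finset.sum_congr rfl fun τ _ => by rw [hc τ]]
    rw [← Nat.cast_ofNat (n := 2)]
    push_cast [← sum_pow_nonrecs n]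
    rfl
  rw [Finset.sum_congr rfl fun σ0 _ => hin σ0, Finset.sum_const, Finset.card_univ,
    Fintype.card_perm, Fintype.card_fin, nsmul_eq_mul]

lemma sum_c_card_one (hn : 0 < n) :
    ∑ c : Fin 2 → Equiv.Perm (Fin n), (if (Fc c).card = 1 then (1:ℝ) else 0)
      = n.factorial * (n-1).factorial := by
  rw [← Equiv.sum_comp (piFinTwoEquiv (fun _ : Fin 2 => Equiv.Perm (Fin n))).symm
    (fun c => (if (Fc c).card = 1 then (1:ℝ) else 0))]
  have hsymm : ∀ p : Equiv.Perm (Fin n) × Equiv.Perm (Fin n),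
      (piFinTwoEquiv (fun _ : Fin 2 => Equiv.Perm (Fin n))).symm p = ![p.1, p.2] := by
    rintro ⟨a, b⟩; funext i; fin_cases i <;> rfl
  rw [Finset.sum_congr rfl fun p _ => by rw [hsymm p]]
  rw [Fintype.sum_prod_type]
  have hin : ∀ σ0 : Equiv.Perm (Fin n),
      ∑ σ1 : Equiv.Perm (Fin n), (if (Fc ![σ0, σ1]).card = 1 then (1:ℝ) else 0)
        = ((n-1).factorial : ℝ) := by
    intro σ0
    rw [← Equiv.sum_comp (Equiv.mulRight σ0)
      (fun σ1 => (if (Fc ![σ0, σ1]).card = 1 then (1:ℝ) else 0))]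
    have hc : ∀ τ : Equiv.Perm (Fin n), (Fc ![σ0, Equiv.mulRight σ0 τ]).card = (recs τ).card := by
      intro τ
      have he : Equiv.mulRight σ0 τ = τ * σ0 := rfl
      rw [he]
      have : Fc ![σ0, τ * σ0] = (univ.filter (fun j => ¬ pairDom σ0 (τ * σ0) j)) := by
        ext j
        rw [Fc_pair, mem_filter]
        simp
      rw [this, card_pairFront]
    rw [Finset.sum_congr rfl fun τ _ => by rw [hc τ]]
    have := count_recs_one n hn
    have hcast : ((∑ τ : Equiv.Perm (Fin n), if (recs τ).card = 1 then (1:ℕ) else 0 : ℕ) : ℝ)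
        = ∑ τ : Equiv.Perm (Fin n), (if (recs τ).card = 1 then (1:ℝ) else 0) := by
      push_cast
      exact Finset.sum_congr rfl fun τ _ => by split <;> norm_num
    rw [← hcast, this]
  rw [Finset.sum_congr rfl fun σ0 _ => hin σ0, Finset.sum_const, Finset.card_univ,
    Fintype.card_perm, Fintype.card_fin, nsmul_eq_mul]

end Sums

section Master
open Classical

lemma sumFUP (hn : 0 < n) :
    ∑ ω : Omega 2 n, (if FUP ω then (1:ℝ) else 0)
      = 2 * n.factorial * dfact n := by
  rw [Fintype.sum_prod_type, Finset.sum_comm]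
  have hin : ∀ c : Fin 2 → Equiv.Perm (Fin n),
      ∑ u : Fin n → Equiv.Perm (Fin 2), (if FUP ((u, c) : Omega 2 n) then (1:ℝ) else 0)
        = 2 * 2 ^ ((univ.filter (fun j => j ∉ Fc c)).card) := by
    intro c
    have hpt : ∀ u : Fin n → Equiv.Perm (Fin 2),
        (if FUP ((u, c) : Omega 2 n) then (1:ℝ) else 0)
          = (if (∃ i, ∀ j ∈ Fc c, favOf (u j) = i) then (1:ℝ) else 0) :=
      fun u => if_congr Iff.rfl rfl rfl
    rw [Finset.sum_congr rfl fun u _ => hpt u]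
    exact sum_indicator_all (Fc c) (Fc_nonempty hn c)
  rw [Finset.sum_congr rfl fun c _ => hin c, ← Finset.mul_sum, sum_c_pow]
  ring

lemma denom_eq (hn : 0 < n) :
    ∑ ω : Omega 2 n, (if GameSolvable ω then (1:ℝ) else 0)
      = 2 * n.factorial * dfact n := by
  rw [Finset.sum_congr rfl fun ω _ => if_congr (solvable_iff ω hn) rfl rfl]
  exact sumFUP hn

lemma sumConst (hn : 0 < n) :
    ∑ ω : Omega 2 n, (if ConstP ω then (1:ℝ) else 0) = 2 * (n.factorial : ℝ)^2 := by
  rw [Fintype.sum_prod_type, Finset.sum_comm]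
  have hin : ∀ c : Fin 2 → Equiv.Perm (Fin n),
      ∑ u : Fin n → Equiv.Perm (Fin 2), (if ConstP ((u, c) : Omega 2 n) then (1:ℝ) else 0)
        = 2 := by
    intro c
    have h1 : ∀ u : Fin n → Equiv.Perm (Fin 2),
        (ConstP ((u, c) : Omega 2 n)) ↔ (∃ i, ∀ j ∈ (univ : Finset (Fin n)), favOf (u j) = i) := by
      intro u
      exact ⟨fun ⟨i, h⟩ => ⟨i, fun j _ => h j⟩, fun ⟨i, h⟩ => ⟨i, fun j => h j (mem_univ j)⟩⟩
    rw [Finset.sum_congr rfl fun u _ => if_congr (h1 u) rfl rfl,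
      sum_indicator_all univ (univ_fin_nonempty hn)]
    simp
  rw [Finset.sum_congr rfl fun c _ => hin c, Finset.sum_const, Finset.card_univ,
    Fintype.card_fun, Fintype.card_perm, Fintype.card_fin, nsmul_eq_mul]
  push_cast
  norm_num [Fintype.card_fin]
  ring

lemma sumCard1 (hn : 0 < n) :
    ∑ ω : Omega 2 n, (if (Fc ω.2).card = 1 then (1:ℝ) else 0)
      = 2^n * n.factorial * (n-1).factorial := by
  rw [Fintype.sum_prod_type, Finset.sum_comm]
  have hin : ∀ c : Fin 2 → Equiv.Perm (Fin n),
      ∑ _u : Fin n → Equiv.Perm (Fin 2), (if (Fc c).card = 1 then (1:ℝ) else 0)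
        = 2^n * (if (Fc c).card = 1 then (1:ℝ) else 0) := by
    intro c
    rw [Finset.sum_const, Finset.card_univ, Fintype.card_fun, Fintype.card_perm,
      Fintype.card_fin, nsmul_eq_mul]
    norm_num
  rw [Finset.sum_congr rfl fun c _ => hin c, ← Finset.mul_sum, sum_c_card_one hn]
  ring

lemma numer_eq (hn : 0 < n) :
    ∑ ω : Omega 2 n, (if GameSolvable ω then (GameRounds ω : ℝ) else 0)
      = 6 * n.factorial * dfact n - 2 * (n.factorial : ℝ)^2
        - 2^n * n.factorial * (n-1).factorial := by
  rw [Finset.sum_congr rfl fun ω _ => rounds_real ω hn]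
  rw [Finset.sum_sub_distrib, Finset.sum_sub_distrib, ← Finset.mul_sum,
    sumFUP hn, sumConst hn, sumCard1 hn]
  ring

lemma dfact_pos : ∀ k, 0 < dfact k
  | 0 => Nat.one_pos
  | (k+1) => Nat.mul_pos (by omega) (dfact_pos k)

lemma condExp_formula (hn : 0 < n) :
    condExpRounds 2 n =
      (6 * n.factorial * dfact n - 2 * (n.factorial : ℝ)^2
          - 2^n * n.factorial * (n-1).factorial)
        / (2 * n.factorial * dfact n) := by
  unfold condExpRounds
  rw [numer_eq hn, denom_eq hn]

end Master
end GameDev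
/-- The conditional expected number of elimination rounds `E[I(2,n)]` is
strictly increasing in `n`: for every `n ≥ 1`, `E[I(2,n+1)] > E[I(2,n)]`. -/
theorem stmt6 (n : ℕ) (hn : 1 ≤ n) :
    condExpRounds 2 n < condExpRounds 2 (n + 1) := by
  have hn0 : 0 < n := hn
  rw [condExp_formula hn0, condExp_formula (Nat.succ_pos n)]
  set A : ℝ := (n.factorial : ℝ) with hA
  set G : ℝ := ((n-1).factorial : ℝ) with hG
  set D : ℝ := (dfact n : ℝ) with hD
  have hApos : 0 < A := by rw [hA]; exact_mod_cast Nat.factorial_pos n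
  have hGpos : 0 < G := by rw [hG]; exact_mod_cast Nat.factorial_pos (n-1)
  have hDpos : 0 < D := by rw [hD]; exact_mod_cast dfact_pos n
  have hPpos : 0 < (2:ℝ)^n := by positivity
  have hnR : (1:ℝ) ≤ (n:ℝ) := by exact_mod_cast hn
  have hAnG : A = (n:ℝ) * G := by
    rw [hA, hG, ← Nat.mul_factorial_pred hn0.ne']; push_cast; ring
  have hfac1 : (((n+1).factorial : ℕ) : ℝ) = ((n:ℝ)+1) * A := by
    rw [Nat.factorial_succ]; push_cast [hA]; ring
  have hdf1 : ((dfact (n+1) : ℕ) : ℝ) = (2*(n:ℝ)+1) * D := by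
    rw [show dfact (n+1) = (2*n+1) * dfact n from rfl]; push_cast [hD]; ring
  have hfacm : ((((n+1)-1).factorial : ℕ) : ℝ) = A := by
    rw [show (n+1)-1 = n from rfl, hA]
  have hpow : (2:ℝ)^(n+1) = 2 * 2^n := by rw [pow_succ]; ring
  rw [hfac1, hdf1, hfacm, hpow]
  have hden1 : (0:ℝ) < 2 * A * D := by positivity
  have hden2 : (0:ℝ) < 2 * (((n:ℝ)+1) * A) * ((2*(n:ℝ)+1) * D) := by
    apply mul_pos (mul_pos two_pos (mul_pos (by linarith) hApos))
    exact mul_pos (by linarith) hDpos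
  rw [div_lt_div_iff₀ hden1 hden2]
  have key : (6 * (((n:ℝ)+1) * A) * ((2*(n:ℝ)+1) * D) - 2 * (((n:ℝ)+1) * A)^2
        - 2 * 2^n * (((n:ℝ)+1) * A) * A) * (2 * A * D)
      - (6 * A * D - 2 * A^2 - 2^n * A * G) * (2 * (((n:ℝ)+1) * A) * ((2*(n:ℝ)+1) * D))
      = 2 * ((n:ℝ)*G)^2 * D * G * ((n:ℝ)+1) * (2*(n:ℝ)^2 + 2^n) := by
    rw [hAnG]; ring
  have h1 : (0:ℝ) < (n:ℝ) * G := mul_pos (by linarith) hGpos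
  have hpos : (0:ℝ) < 2 * ((n:ℝ)*G)^2 * D * G * ((n:ℝ)+1) * (2*(n:ℝ)^2 + 2^n) := by
    have h2 : (0:ℝ) < ((n:ℝ)*G)^2 := pow_pos h1 2
    have h3 : (0:ℝ) < 2*(n:ℝ)^2 + 2^n := by nlinarith
    exact mul_pos (mul_pos (mul_pos (mul_pos (mul_pos two_pos h2) hDpos) hGpos)
      (by linarith)) h3
  nlinarith [key, hpos]
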